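/- Let X be an n-dimensional real polyhedral normed linear space and T : X → X a norm-one linear operator. Then T is an isometry if and only if: (i) ‖Tu‖ = ‖Tv‖ for all extreme points u, v of the unit ball B_X, and (ii) for each extreme point u of B_X there exist n linearly independent functionals f₁, …, f_n ∈ J(u) such that Tu ⊥_B Tz for all z ∈ ker f_i, for each 1 ≤ i ≤ n. -/

import Mathlib

/-- Birkhoff-James orthogonality. -/
def BJOrth {X : Type*} [NormedAddCommGroup X] [NormedSpace ℝ X] (x y : X) : Prop :=
  ∀ t : ℝ, ‖x‖ ≤ ‖x + t • y‖

/-- The set of support functionals at `x`. -/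
def suppFun {X : Type*} [NormedAddCommGroup X] [NormedSpace ℝ X] (x : X) :
    Set (X →L[ℝ] ℝ) := {f | ‖f‖ = 1 ∧ f x = ‖x‖}

/-- A finite-dimensional normed space is polyhedral if its closed unit ball has
finitely many extreme points. -/
def IsPolyhedralSpace (X : Type*) [NormedAddCommGroup X] [NormedSpace ℝ X] : Prop :=
  (Set.extremePoints ℝ (Metric.closedBall (0 : X) 1)).Finite

open Set Metric Module

section Aux

variable {X : Type*} [NormedAddCommGroup X] [NormedSpace ℝ X]

lemma neg_mem_ext {u : X} (hu : u ∈ Set.extremePoints ℝ (Metric.closedBall (0 : X) 1)) :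
    -u ∈ Set.extremePoints ℝ (Metric.closedBall (0 : X) 1) := by
  rw [mem_extremePoints] at hu ⊢
  refine ⟨by simpa [mem_closedBall_zero_iff] using hu.1, ?_⟩
  rintro x₁ hx₁ x₂ hx₂ ⟨a, b, ha, hb, hab, hsum⟩
  have h1 : -x₁ ∈ Metric.closedBall (0 : X) 1 := by
    simpa [mem_closedBall_zero_iff] using hx₁
  have h2 : -x₂ ∈ Metric.closedBall (0 : X) 1 := by
    simpa [mem_closedBall_zero_iff] using hx₂
  have hseg : u ∈ openSegment ℝ (-x₁) (-x₂) := by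
    refine ⟨a, b, ha, hb, hab, ?_⟩
    rw [smul_neg, smul_neg, ← neg_add, hsum, neg_neg]
  obtain ⟨e1, e2⟩ := hu.2 (-x₁) h1 (-x₂) h2 hseg
  constructor
  · rw [← neg_neg x₁, e1]
  · rw [← neg_neg x₂, e2]

lemma norm_one_of_ext [Nontrivial X] {u : X}
    (hu : u ∈ Set.extremePoints ℝ (Metric.closedBall (0 : X) 1)) : ‖u‖ = 1 := by
  rw [mem_extremePoints] at hu
  have hle : ‖u‖ ≤ 1 := by simpa [mem_closedBall_zero_iff] using hu.1
  by_contra hne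
  have hlt : ‖u‖ < 1 := lt_of_le_of_ne hle hne
  obtain ⟨v, hv⟩ := exists_ne (0 : X)
  set w : X := ((1 - ‖u‖) / ‖v‖) • v with hw
  have hvn : (0:ℝ) < ‖v‖ := norm_pos_iff.2 hv
  have hδ : 0 < (1 - ‖u‖) / ‖v‖ := div_pos (by linarith) hvn
  have hwnorm : ‖w‖ = 1 - ‖u‖ := by
    rw [hw, norm_smul, Real.norm_eq_abs, abs_of_pos hδ, div_mul_cancel₀]
    exact norm_ne_zero_iff.2 hv
  have hwne : w ≠ 0 := by
    intro h
    rw [h, norm_zero] at hwnorm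
    linarith
  have h1 : u - w ∈ Metric.closedBall (0 : X) 1 := by
    rw [mem_closedBall_zero_iff]
    calc ‖u - w‖ ≤ ‖u‖ + ‖w‖ := norm_sub_le _ _
    _ = 1 := by rw [hwnorm]; ring
  have h2 : u + w ∈ Metric.closedBall (0 : X) 1 := by
    rw [mem_closedBall_zero_iff]
    calc ‖u + w‖ ≤ ‖u‖ + ‖w‖ := norm_add_le _ _
    _ = 1 := by rw [hwnorm]; ring
  have hseg : u ∈ openSegment ℝ (u - w) (u + w) := by
    refine ⟨1/2, 1/2, by norm_num, by norm_num, by norm_num, ?_⟩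
    module
  obtain ⟨e1, _⟩ := hu.2 (u - w) h1 (u + w) h2 hseg
  exact hwne (by simpa using sub_eq_self.mp e1)

lemma ball_eq_hull [FiniteDimensional ℝ X] (hpX : IsPolyhedralSpace X) :
    convexHull ℝ (Set.extremePoints ℝ (Metric.closedBall (0 : X) 1))
      = Metric.closedBall (0 : X) 1 := by
  have h1 := closure_convexHull_extremePoints (isCompact_closedBall (0 : X) 1)
    (convex_closedBall (0 : X) 1)
  rw [← (hpX.isClosed_convexHull (𝕜 := ℝ)).closure_eq]
  exact h1

/-- a functional which is `≤ 1` on all extreme points has norm at most one. -/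
lemma norm_le_one_of_le_on_ext [FiniteDimensional ℝ X] (hpX : IsPolyhedralSpace X)
    (φ : X →L[ℝ] ℝ)
    (h : ∀ v ∈ Set.extremePoints ℝ (Metric.closedBall (0 : X) 1), φ v ≤ 1) : ‖φ‖ ≤ 1 := by
  have hball := ball_eq_hull hpX
  have hb : ∀ x ∈ Metric.closedBall (0 : X) 1, φ x ≤ 1 := by
    intro x hx
    rw [← hball] at hx
    have hconv : Convex ℝ {y : X | φ y ≤ 1} :=
      (convex_Iic (1:ℝ)).linear_preimage (φ : X →ₗ[ℝ] ℝ)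
    exact convexHull_min h hconv hx
  refine φ.opNorm_le_bound zero_le_one ?_
  intro x
  rcases eq_or_ne x 0 with rfl | hx
  · simp
  · have hxn : (0:ℝ) < ‖x‖ := norm_pos_iff.2 hx
    have h1 : ‖x‖⁻¹ • x ∈ Metric.closedBall (0 : X) 1 := by
      rw [mem_closedBall_zero_iff, norm_smul, Real.norm_eq_abs, abs_of_pos (by positivity),
        inv_mul_cancel₀ hxn.ne']
    have h2 : -(‖x‖⁻¹ • x) ∈ Metric.closedBall (0 : X) 1 := by
      rwa [mem_closedBall_zero_iff, norm_neg, ← mem_closedBall_zero_iff]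
    have e1 := hb _ h1
    have e2 := hb _ h2
    rw [map_smul, smul_eq_mul] at e1
    rw [map_neg, map_smul, smul_eq_mul] at e2
    have e1' : φ x ≤ ‖x‖ := by
      have := mul_le_mul_of_nonneg_left e1 hxn.le
      rwa [← mul_assoc, mul_inv_cancel₀ hxn.ne', one_mul, mul_one] at this
    have e2' : -(φ x) ≤ ‖x‖ := by
      have := mul_le_mul_of_nonneg_left e2 hxn.le
      rwa [mul_neg, ← mul_assoc, mul_inv_cancel₀ hxn.ne', one_mul, mul_one] at this
    rw [Real.norm_eq_abs, one_mul]
    exact abs_le.mpr ⟨by linarith, e1'⟩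

lemma finrank_clm [FiniteDimensional ℝ X] :
    finrank ℝ (X →L[ℝ] ℝ) = finrank ℝ X := by
  rw [← (LinearMap.toContinuousLinearMap :
    (X →ₗ[ℝ] ℝ) ≃ₗ[ℝ] (X →L[ℝ] ℝ)).finrank_eq]
  exact Subspace.dual_finrank_eq

instance [FiniteDimensional ℝ X] : FiniteDimensional ℝ (X →L[ℝ] ℝ) :=
  (LinearMap.toContinuousLinearMap : (X →ₗ[ℝ] ℝ) ≃ₗ[ℝ] (X →L[ℝ] ℝ)).finiteDimensional

/-- a linearly independent family of `n = dim X` functionals separates points. -/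
lemma eq_zero_of_forall_indep [FiniteDimensional ℝ X] {n : ℕ} (hX : finrank ℝ X = n)
    (f : Fin n → (X →L[ℝ] ℝ)) (hf : LinearIndependent ℝ f) {x : X}
    (hx : ∀ i, f i x = 0) : x = 0 := by
  by_contra hx0
  obtain ⟨g, hg1, hg2⟩ := exists_dual_vector ℝ x (norm_ne_zero_iff.2 hx0)
  have hcard : Fintype.card (Fin n) = finrank ℝ (X →L[ℝ] ℝ) := by
    rw [Fintype.card_fin, finrank_clm, hX]
  have hspan : Submodule.span ℝ (Set.range f) = ⊤ :=
    hf.span_eq_top_of_card_eq_finrank' hcard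
  set ev : (X →L[ℝ] ℝ) →ₗ[ℝ] ℝ :=
    { toFun := fun ψ => ψ x
      map_add' := by intro a b; simp
      map_smul' := by intro c a; simp }
  have hker : Set.range f ⊆ (LinearMap.ker ev : Set (X →L[ℝ] ℝ)) := by
    rintro _ ⟨i, rfl⟩
    simpa [ev, LinearMap.mem_ker] using hx i
  have hle : Submodule.span ℝ (Set.range f) ≤ LinearMap.ker ev :=
    Submodule.span_le.mpr hker
  rw [hspan] at hle
  have hg0 : ev g = 0 := hle (Submodule.mem_top)
  have : g x = 0 := hg0
  rw [hg2] at this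
  exact hx0 (norm_eq_zero.mp (by exact_mod_cast this))

end Aux

section Smooth

variable {X : Type*} [NormedAddCommGroup X] [NormedSpace ℝ X]

set_option maxHeartbeats 1000000 in
/-- In a polyhedral space, every extreme point of the unit ball admits `n` linearly
independent support functionals. -/
lemma exists_indep_suppFun [FiniteDimensional ℝ X] [Nontrivial X]
    (hpX : IsPolyhedralSpace X) {n : ℕ} (hX : finrank ℝ X = n) {u : X}
    (hu : u ∈ Set.extremePoints ℝ (Metric.closedBall (0 : X) 1)) :
    ∃ f : Fin n → (X →L[ℝ] ℝ), LinearIndependent ℝ f ∧ ∀ i, f i ∈ suppFun u := by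
  set E := Set.extremePoints ℝ (Metric.closedBall (0 : X) 1) with hE
  have hball := ball_eq_hull hpX
  have hu1 : ‖u‖ = 1 := norm_one_of_ext hu
  -- u is not in the convex hull of the other extreme points
  have hnot : u ∉ convexHull ℝ (E \ {u}) := by
    have h2 := (convex_closedBall (0 : X) 1).mem_extremePoints_iff_mem_diff_convexHull_diff.mp hu
    intro hc
    exact h2.2 (convexHull_mono (Set.diff_subset_diff_left extremePoints_subset) hc)
  have hCc : IsClosed (convexHull ℝ (E \ {u})) :=
    (hpX.subset Set.diff_subset).isClosed_convexHull (𝕜 := ℝ)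
  obtain ⟨φ, s, hφ1, hφ2⟩ :=
    geometric_hahn_banach_closed_point (convex_convexHull ℝ (E \ {u})) hCc hnot
  have hune : -u ≠ u := by
    intro h
    have h2 : u + u = 0 := by nth_rewrite 2 [← h]; exact add_neg_cancel u
    have h3 : (2:ℝ) • u = 0 := by rw [two_smul]; exact h2
    have h4 : u = 0 := by
      rcases smul_eq_zero.mp h3 with h' | h'
      · norm_num at h'
      · exact h'
    rw [h4, norm_zero] at hu1; norm_num at hu1
  have hneg : -u ∈ E \ {u} := ⟨neg_mem_ext hu, by simpa using hune⟩
  have hφv : ∀ v ∈ E \ {u}, φ v < φ u := fun v hv =>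
    lt_trans (hφ1 v (subset_convexHull ℝ _ hv)) hφ2
  have hφu : 0 < φ u := by
    have := hφv _ hneg
    rw [map_neg] at this
    linarith
  -- the set of strictly supporting functionals is open
  set U : Set (X →L[ℝ] ℝ) := {g | 0 < g u ∧ ∀ v ∈ E \ {u}, g v < g u} with hU
  have hEfin : (E \ {u}).Finite := hpX.subset Set.diff_subset
  have hev : ∀ x : X, Continuous fun g : X →L[ℝ] ℝ => g x := by
    intro x
    exact (ContinuousLinearMap.apply ℝ ℝ x).continuous
  have hUopen : IsOpen U := by
    have : U = {g : X →L[ℝ] ℝ | 0 < g u} ∩ ⋂ v ∈ E \ {u}, {g : X →L[ℝ] ℝ | g v < g u} := by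
      ext g
      simp [hU, Set.mem_iInter]
    rw [this]
    refine (isOpen_lt continuous_const (hev u)).inter ?_
    exact hEfin.isOpen_biInter fun v _ => isOpen_lt (hev v) (hev u)
  have hφU : φ ∈ U := ⟨hφu, hφv⟩
  -- U spans the dual space
  have hspan : Submodule.span ℝ U = ⊤ := by
    rw [eq_top_iff]
    intro g _
    have hcont : Continuous fun t : ℝ => φ + t • g := by continuity
    have h1 : Filter.Tendsto (fun t : ℝ => φ + t • g) (nhds 0) (nhds φ) := by
      have h0 := hcont.tendsto 0
      simpa using h0
    have h2 : ∀ᶠ t in nhds (0:ℝ), φ + t • g ∈ U := h1.eventually (hUopen.mem_nhds hφU)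
    have h3 : ∀ᶠ t in nhdsWithin (0:ℝ) {0}ᶜ, φ + t • g ∈ U ∧ t ≠ 0 :=
      ((h2.filter_mono nhdsWithin_le_nhds).and (eventually_mem_nhdsWithin.mono fun t ht => ht))
    obtain ⟨t, htU, ht0⟩ := h3.exists
    have m1 : φ + t • g ∈ Submodule.span ℝ U := Submodule.subset_span htU
    have m2 : φ ∈ Submodule.span ℝ U := Submodule.subset_span hφU
    have m3 : t • g ∈ Submodule.span ℝ U := by
      have := Submodule.sub_mem _ m1 m2
      simpa using this
    have := Submodule.smul_mem _ t⁻¹ m3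
    rwa [smul_smul, inv_mul_cancel₀ ht0, one_smul] at this
  -- extract a basis contained in U
  obtain ⟨b, hbU, hbspan, hbli⟩ := exists_linearIndependent ℝ U
  rw [hspan] at hbspan
  have hbfin : b.Finite := hbli.setFinite
  haveI := hbfin.fintype
  have hbbasis : Basis b ℝ (X →L[ℝ] ℝ) :=
    Basis.mk hbli (by rw [Subtype.range_coe, hbspan])
  have hcard : Fintype.card b = n := by
    have := Module.finrank_eq_card_basis hbbasis
    rw [finrank_clm, hX] at this
    exact this.symm
  have e : Fin n ≃ b := (Fintype.equivFinOfCardEq hcard).symm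
  set g : Fin n → (X →L[ℝ] ℝ) := fun i => ((e i : b) : X →L[ℝ] ℝ) with hg
  have hgli : LinearIndependent ℝ g := hbli.comp e e.injective
  have hgU : ∀ i, g i ∈ U := fun i => hbU (e i).2
  have hgu : ∀ i, 0 < g i u := fun i => (hgU i).1
  -- normalize
  set w : Fin n → ℝˣ := fun i => Units.mk0 ((g i u)⁻¹) (inv_ne_zero (hgu i).ne') with hw
  refine ⟨fun i => ((g i u)⁻¹ : ℝ) • g i, ?_, ?_⟩
  · have hsm := hgli.units_smul w
    have heq : (fun i => ((g i u)⁻¹ : ℝ) • g i) = w • g := by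
      funext i
      rw [Pi.smul_apply', Units.smul_def, hw]
      rfl
    rw [heq]
    exact hsm
  · intro i
    set F : X →L[ℝ] ℝ := ((g i u)⁻¹ : ℝ) • g i with hF
    have hFu : F u = 1 := by
      rw [hF]
      simp [ContinuousLinearMap.smul_apply, inv_mul_cancel₀ (hgu i).ne']
    have hFle : ∀ v ∈ E, F v ≤ 1 := by
      intro v hv
      rcases eq_or_ne v u with rfl | hvu
      · rw [hFu]
      · have hlt : g i v < g i u := (hgU i).2 v ⟨hv, hvu⟩
        have : F v < 1 := by
          rw [hF]
          simp only [ContinuousLinearMap.smul_apply, smul_eq_mul]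
          calc (g i u)⁻¹ * g i v < (g i u)⁻¹ * g i u :=
            mul_lt_mul_of_pos_left hlt (inv_pos.2 (hgu i))
          _ = 1 := inv_mul_cancel₀ (hgu i).ne'
        exact this.le
    have hFnorm : ‖F‖ = 1 := by
      refine le_antisymm (norm_le_one_of_le_on_ext hpX F hFle) ?_
      have h1 : (1:ℝ) = F u := hFu.symm
      calc (1:ℝ) = F u := h1
      _ ≤ ‖F u‖ := le_abs_self _
      _ ≤ ‖F‖ * ‖u‖ := F.le_opNorm u
      _ = ‖F‖ := by rw [hu1, mul_one]
    exact ⟨hFnorm, by rw [hFu, hu1]⟩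

end Smooth

set_option maxHeartbeats 1000000 in
theorem stmt_18 {X : Type*} [NormedAddCommGroup X] [NormedSpace ℝ X] (n : ℕ)
    (hX : Module.finrank ℝ X = n) [FiniteDimensional ℝ X]
    (hpX : IsPolyhedralSpace X)
    (T : X →L[ℝ] X) (hT : ‖T‖ = 1) :
    (∀ x : X, ‖T x‖ = ‖x‖) ↔
      ((∀ u ∈ Set.extremePoints ℝ (Metric.closedBall (0 : X) 1),
          ∀ v ∈ Set.extremePoints ℝ (Metric.closedBall (0 : X) 1), ‖T u‖ = ‖T v‖) ∧
       (∀ u ∈ Set.extremePoints ℝ (Metric.closedBall (0 : X) 1),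
          ∃ f : Fin n → (X →L[ℝ] ℝ), LinearIndependent ℝ f ∧ (∀ i, f i ∈ suppFun u) ∧
            ∀ i : Fin n, ∀ z : X, f i z = 0 → BJOrth (T u) (T z))) := by
  have hTne : ∃ x : X, T x ≠ 0 := by
    by_contra hc
    push_neg at hc
    have : T = 0 := ContinuousLinearMap.ext fun x => by simpa using hc x
    rw [this] at hT
    simp at hT
  obtain ⟨x₀, hx₀⟩ := hTne
  haveI : Nontrivial X := ⟨x₀, 0, fun h => hx₀ (by rw [h, map_zero])⟩
  set E := Set.extremePoints ℝ (Metric.closedBall (0 : X) 1) with hE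
  have hball := ball_eq_hull hpX
  have hEne : E.Nonempty := by
    rcases E.eq_empty_or_nonempty with h | h
    · exfalso
      rw [hE] at h
      rw [h, convexHull_empty] at hball
      have h0 : (0:X) ∈ Metric.closedBall (0:X) 1 :=
        mem_closedBall_zero_iff.mpr (by norm_num)
      rw [← hball] at h0
      exact h0
    · exact h
  have hu1 : ∀ u ∈ E, ‖u‖ = 1 := fun u hu => norm_one_of_ext hu
  constructor
  · -- forward direction: isometries satisfy the two conditions
    intro hiso
    constructor
    · intro u hu v hv
      rw [hiso, hiso, norm_one_of_ext hu, norm_one_of_ext hv]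
    · intro u hu
      obtain ⟨f, hfli, hfs⟩ := exists_indep_suppFun hpX hX hu
      refine ⟨f, hfli, hfs, ?_⟩
      intro i z hz t
      have h1 : T u + t • T z = T (u + t • z) := by rw [map_add, map_smul]
      rw [h1, hiso, hiso]
      have h2 : f i (u + t • z) = ‖u‖ := by
        rw [map_add, map_smul, (hfs i).2, hz, smul_eq_mul, mul_zero, add_zero]
      calc ‖u‖ = f i (u + t • z) := h2.symm
      _ ≤ |f i (u + t • z)| := le_abs_self _
      _ = ‖f i (u + t • z)‖ := (Real.norm_eq_abs _).symm
      _ ≤ ‖f i‖ * ‖u + t • z‖ := (f i).le_opNorm _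
      _ = ‖u + t • z‖ := by rw [(hfs i).1, one_mul]
  · -- backward direction
    rintro ⟨hext, hsupp⟩
    -- the norm of T is attained at an extreme point
    obtain ⟨u₀, hu₀E, hmax0⟩ := Set.Finite.exists_maximalFor (fun u => ‖T u‖) E hpX hEne
    have hmax : ∀ u ∈ E, ‖T u‖ ≤ ‖T u₀‖ := by
      intro u hu
      rcases le_or_gt ‖T u‖ ‖T u₀‖ with h | h
      · exact h
      · exact hmax0 hu h.le
    have hTu₀ : ‖T u₀‖ = 1 := by
      have hballle : ∀ x ∈ Metric.closedBall (0:X) 1, ‖T x‖ ≤ ‖T u₀‖ := by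
        intro x hx
        rw [← hball] at hx
        have hset : {y : X | ‖T y‖ ≤ ‖T u₀‖}
            = (T : X →ₗ[ℝ] X) ⁻¹' (Metric.closedBall (0:X) ‖T u₀‖) := by
          ext y
          simp [mem_closedBall_zero_iff]
        have hconv : Convex ℝ {y : X | ‖T y‖ ≤ ‖T u₀‖} := by
          rw [hset]
          exact (convex_closedBall _ _).linear_preimage _
        exact convexHull_min (fun v hv => hmax v hv) hconv hx
      refine le_antisymm ?_ ?_
      · calc ‖T u₀‖ ≤ ‖T‖ * ‖u₀‖ := T.le_opNorm u₀
        _ = 1 := by rw [hT, hu1 u₀ hu₀E, mul_one]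
      · rw [← hT]
        refine T.opNorm_le_bound (norm_nonneg _) ?_
        intro x
        rcases eq_or_ne x 0 with rfl | hx
        · simp
        · have hxn : (0:ℝ) < ‖x‖ := norm_pos_iff.2 hx
          have h1 : ‖x‖⁻¹ • x ∈ Metric.closedBall (0 : X) 1 := by
            rw [mem_closedBall_zero_iff, norm_smul, Real.norm_eq_abs,
              abs_of_pos (by positivity), inv_mul_cancel₀ hxn.ne']
          have h2 := hballle _ h1
          rw [map_smul, norm_smul, Real.norm_eq_abs,
            abs_of_pos (show (0:ℝ) < ‖x‖⁻¹ by positivity)] at h2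
          have := mul_le_mul_of_nonneg_left h2 hxn.le
          rwa [← mul_assoc, mul_inv_cancel₀ hxn.ne', one_mul, mul_comm ‖x‖ _] at this
    have hTu : ∀ u ∈ E, ‖T u‖ = 1 := fun u hu => by rw [hext u hu u₀ hu₀E, hTu₀]
    -- key estimate from Birkhoff-James orthogonality
    have key : ∀ u ∈ E, ∃ f : Fin n → (X →L[ℝ] ℝ), LinearIndependent ℝ f ∧
        (∀ i, f i u = 1) ∧ (∀ i y, |f i y| ≤ ‖T y‖) := by
      intro u hu
      obtain ⟨f, hfli, hfs, hBJ⟩ := hsupp u hu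
      have hfu : ∀ i, f i u = 1 := fun i => by rw [(hfs i).2, hu1 u hu]
      refine ⟨f, hfli, hfu, ?_⟩
      intro i y
      rcases eq_or_ne (f i y) 0 with h0 | h0
      · rw [h0, abs_zero]
        exact norm_nonneg _
      · set z := y - f i y • u with hz
        have hz0 : f i z = 0 := by
          rw [hz, map_sub, map_smul, hfu i, smul_eq_mul, mul_one, sub_self]
        have hb := hBJ i z hz0 ((f i y)⁻¹)
        rw [hTu u hu] at hb
        have he : T u + (f i y)⁻¹ • T z = (f i y)⁻¹ • T y := by
          rw [hz, map_sub, map_smul, smul_sub, smul_smul, inv_mul_cancel₀ h0, one_smul]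
          abel
        rw [he, norm_smul, Real.norm_eq_abs, abs_inv] at hb
        have habs : 0 < |f i y| := abs_pos.2 h0
        have := mul_le_mul_of_nonneg_left hb habs.le
        rwa [mul_one, ← mul_assoc, mul_inv_cancel₀ habs.ne', one_mul] at this
    -- T is injective
    obtain ⟨f₀, hf₀li, hf₀u, hf₀star⟩ := key u₀ hu₀E
    have hker : ∀ x : X, T x = 0 → x = 0 := by
      intro x hx
      refine eq_zero_of_forall_indep hX f₀ hf₀li ?_
      intro i
      have h := hf₀star i x
      rw [hx, norm_zero] at h
      exact abs_eq_zero.mp (le_antisymm h (abs_nonneg _))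
    have hinj : Function.Injective T := by
      intro a b hab
      have h1 : T (a - b) = 0 := by rw [map_sub, hab, sub_self]
      exact sub_eq_zero.mp (hker _ h1)
    have hsurj : Function.Surjective T := by
      have h1 : Function.Injective (T : X →ₗ[ℝ] X) := hinj
      exact LinearMap.injective_iff_surjective.mp h1
    -- T maps extreme points to extreme points
    have hTE : ∀ u ∈ E, T u ∈ E := by
      intro u hu
      obtain ⟨f, hfli, hfu, hstar⟩ := key u hu
      rw [hE, mem_extremePoints]
      refine ⟨mem_closedBall_zero_iff.mpr (le_of_eq (hTu u hu)), ?_⟩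
      rintro a ha b hb ⟨c, d, hc, hd, hcd, hsum⟩
      obtain ⟨a', ha'⟩ := hsurj a
      obtain ⟨b', hb'⟩ := hsurj b
      have hu_eq : c • a' + d • b' = u := by
        apply hinj
        rw [map_add, map_smul, map_smul, ha', hb', hsum]
      have hp : ∀ (i : Fin n) (w' w : X), T w' = w → w ∈ Metric.closedBall (0:X) 1 →
          f i w' ≤ 1 := by
        intro i w' w hw hwball
        calc f i w' ≤ |f i w'| := le_abs_self _
        _ ≤ ‖T w'‖ := hstar i w'
        _ = ‖w‖ := by rw [hw]
        _ ≤ 1 := mem_closedBall_zero_iff.mp hwball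
      have heq1 : ∀ i : Fin n, f i a' = 1 ∧ f i b' = 1 := by
        intro i
        have h1 : f i a' ≤ 1 := hp i a' a ha' ha
        have h2 : f i b' ≤ 1 := hp i b' b hb' hb
        have h3 : c * f i a' + d * f i b' = 1 := by
          have h4 := congrArg (f i) hu_eq
          rw [map_add, map_smul, map_smul, hfu i] at h4
          simpa [smul_eq_mul] using h4
        constructor <;> nlinarith
      have hab' : a' = b' := by
        have h5 : a' - b' = 0 := by
          refine eq_zero_of_forall_indep hX f hfli ?_
          intro i
          rw [map_sub, (heq1 i).1, (heq1 i).2, sub_self]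
        exact sub_eq_zero.mp h5
      have hab : a = b := by rw [← ha', ← hb', hab']
      have hTa : T u = a := by
        rw [← hsum, hab, ← add_smul, hcd, one_smul]
      exact ⟨hTa.symm, by rw [← hab]; exact hTa.symm⟩
    -- T permutes the extreme points and hence preserves the unit ball
    have hTEeq : T '' E = E := by
      refine Set.eq_of_subset_of_ncard_le ?_ ?_ hpX
      · rintro _ ⟨u, hu, rfl⟩
        exact hTE u hu
      · exact le_of_eq (Set.ncard_image_of_injective E hinj).symm
    have hTB : T '' Metric.closedBall (0:X) 1 = Metric.closedBall (0:X) 1 := by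
      have h1 : ⇑T '' (convexHull ℝ E) = convexHull ℝ (⇑T '' E) := by
        have h2 := (T : X →ₗ[ℝ] X).image_convexHull E
        simpa using h2
      rw [← hball, h1, hTEeq]
    -- conclude that T is an isometry
    intro x
    have hle : ‖T x‖ ≤ ‖x‖ := by
      calc ‖T x‖ ≤ ‖T‖ * ‖x‖ := T.le_opNorm x
      _ = ‖x‖ := by rw [hT, one_mul]
    refine le_antisymm hle ?_
    rcases eq_or_ne x 0 with rfl | hx
    · simp
    · have hTx : T x ≠ 0 := fun h => hx (hker x h)
      have hTxn : 0 < ‖T x‖ := norm_pos_iff.2 hTx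
      have hy : ‖T x‖⁻¹ • T x ∈ Metric.closedBall (0:X) 1 := by
        rw [mem_closedBall_zero_iff, norm_smul, Real.norm_eq_abs,
          abs_of_pos (show (0:ℝ) < ‖T x‖⁻¹ by positivity), inv_mul_cancel₀ hTxn.ne']
      rw [← hTB] at hy
      obtain ⟨z, hz, hzeq⟩ := hy
      have hzx : z = ‖T x‖⁻¹ • x := by
        apply hinj
        rw [hzeq, map_smul]
      rw [hzx, mem_closedBall_zero_iff, norm_smul, Real.norm_eq_abs,
        abs_of_pos (show (0:ℝ) < ‖T x‖⁻¹ by positivity)] at hz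
      have := mul_le_mul_of_nonneg_left hz hTxn.le
      rwa [← mul_assoc, mul_inv_cancel₀ hTxn.ne', one_mul, mul_one] at this
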